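/- Proposition (mixed twirling with a design): let D be an n-qubit unitary t-design and let 0 ≤ ℓ ≤ t. Then the mixed twirling channels coincide: T^{(ℓ, t−ℓ)}_Haar(Γ) = T^{(ℓ, t−ℓ)}_D(Γ) for every linear operator Γ on (ℂ^{2^n})^{⊗t}. -/

import Mathlib

open Matrix MeasureTheory
open scoped BigOperators

/-- The `t`-fold tensor power `U^{⊗t}` of a matrix `U` on `ℂ^m`, acting on
`(ℂ^m)^{⊗t}`, the tensor power being realized via `t`-tuples of basis indices. -/
def tpow {m : ℕ} (U : Matrix (Fin m) (Fin m) ℂ) (t : ℕ) :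
    Matrix (Fin t → Fin m) (Fin t → Fin m) ℂ :=
  fun z w => ∏ i, U (z i) (w i)

/-- The operator `U^{⊗ℓ} ⊗ (U†)^{⊗k}` acting on `(ℂ^m)^{⊗(ℓ+k)}`. -/
def mixedPow {m : ℕ} (U : Matrix (Fin m) (Fin m) ℂ) (ℓ k : ℕ) :
    Matrix ((Fin ℓ → Fin m) × (Fin k → Fin m)) ((Fin ℓ → Fin m) × (Fin k → Fin m)) ℂ :=
  fun p q => tpow U ℓ p.1 q.1 * tpow Uᴴ k p.2 q.2

lemma tpow_conjT {m : ℕ} (U : Matrix (Fin m) (Fin m) ℂ) (t : ℕ) (x y : Fin t → Fin m) :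
    tpow Uᴴ t x y = starRingEnd ℂ (tpow U t y x) := by
  simp [tpow, conjTranspose_apply, map_prod]

lemma tpow_append {m : ℕ} (U : Matrix (Fin m) (Fin m) ℂ) (ℓ k : ℕ)
    (x z : Fin ℓ → Fin m) (y w : Fin k → Fin m) :
    tpow U (ℓ + k) (Fin.append x y) (Fin.append z w) = tpow U ℓ x z * tpow U k y w := by
  simp [tpow, Fin.prod_univ_add, Fin.append_left, Fin.append_right]

lemma tpow_unit {m t : ℕ} (M : Matrix (Fin t → Fin m) (Fin t → Fin m) ℂ)
    (A B P Q : Fin t → Fin m) :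
    (M * Matrix.single A B (1:ℂ) * Mᴴ) P Q = M P A * starRingEnd ℂ (M Q B) := by
  simp only [Matrix.mul_apply, Matrix.single, conjTranspose_apply, Matrix.of_apply]
  rw [Finset.sum_eq_single B]
  · rw [Finset.sum_eq_single A]
    · simp [RCLike.star_def]
    · intro c _ hc; simp [Ne.symm hc]
    · simp
  · intro c _ hc
    rw [Finset.sum_eq_zero, zero_mul]
    intro d _; simp [Ne.symm hc]
  · simp

lemma tpow_norm_le_one {m t : ℕ} {U : Matrix (Fin m) (Fin m) ℂ}
    (hU : U ∈ Matrix.unitaryGroup (Fin m) ℂ) (x y : Fin t → Fin m) :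
    ‖tpow U t x y‖ ≤ 1 := by
  rw [tpow, norm_prod]
  exact Finset.prod_le_one (fun i _ => norm_nonneg _)
    (fun i _ => entry_norm_bound_of_unitary hU _ _)

/-- **Mixed twirling with a unitary design:** if `D` is an `n`-qubit unitary `t`-design
(with `t = ℓ + k`, stated entrywise with respect to the Haar probability measure `μ` on
`U(2^n)`), then the mixed twirling channels `T^{(ℓ, t-ℓ)}` with respect to the Haar measure
and with respect to `D` coincide on every operator `Γ` on `(ℂ^{2^n})^{⊗t}`. -/
theorem mixed_twirl_of_design (n ℓ k : ℕ)
    [MeasurableSpace (Matrix.unitaryGroup (Fin (2 ^ n)) ℂ)]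
    [BorelSpace (Matrix.unitaryGroup (Fin (2 ^ n)) ℂ)]
    (μ : Measure (Matrix.unitaryGroup (Fin (2 ^ n)) ℂ))
    [μ.IsHaarMeasure] [IsProbabilityMeasure μ]
    (D : Finset (Matrix.unitaryGroup (Fin (2 ^ n)) ℂ)) (hD : D.Nonempty)
    (hdesign : ∀ X : Matrix (Fin (ℓ + k) → Fin (2 ^ n)) (Fin (ℓ + k) → Fin (2 ^ n)) ℂ,
      ∀ p q,
      (D.card : ℂ)⁻¹ *
          ∑ U ∈ D, (tpow (U : Matrix (Fin (2 ^ n)) (Fin (2 ^ n)) ℂ) (ℓ + k) * X *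
            (tpow (U : Matrix (Fin (2 ^ n)) (Fin (2 ^ n)) ℂ) (ℓ + k))ᴴ) p q
        = ∫ V : Matrix.unitaryGroup (Fin (2 ^ n)) ℂ,
            (tpow (V : Matrix (Fin (2 ^ n)) (Fin (2 ^ n)) ℂ) (ℓ + k) * X *
              (tpow (V : Matrix (Fin (2 ^ n)) (Fin (2 ^ n)) ℂ) (ℓ + k))ᴴ) p q ∂μ) :
    ∀ Γ : Matrix ((Fin ℓ → Fin (2 ^ n)) × (Fin k → Fin (2 ^ n)))
        ((Fin ℓ → Fin (2 ^ n)) × (Fin k → Fin (2 ^ n))) ℂ,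
      ∀ p q,
      (∫ V : Matrix.unitaryGroup (Fin (2 ^ n)) ℂ,
          (mixedPow (V : Matrix (Fin (2 ^ n)) (Fin (2 ^ n)) ℂ) ℓ k * Γ *
            (mixedPow (V : Matrix (Fin (2 ^ n)) (Fin (2 ^ n)) ℂ) ℓ k)ᴴ) p q ∂μ)
        = (D.card : ℂ)⁻¹ *
            ∑ U ∈ D, (mixedPow (U : Matrix (Fin (2 ^ n)) (Fin (2 ^ n)) ℂ) ℓ k * Γ *
              (mixedPow (U : Matrix (Fin (2 ^ n)) (Fin (2 ^ n)) ℂ) ℓ k)ᴴ) p q := by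
  intro Γ p q
  -- the monomial moment identity implied by the design property
  have mono : ∀ P A Q B : Fin (ℓ + k) → Fin (2 ^ n),
      (D.card : ℂ)⁻¹ * ∑ U ∈ D,
          tpow (U : Matrix (Fin (2 ^ n)) (Fin (2 ^ n)) ℂ) (ℓ + k) P A *
            starRingEnd ℂ (tpow (U : Matrix (Fin (2 ^ n)) (Fin (2 ^ n)) ℂ) (ℓ + k) Q B)
        = ∫ V : Matrix.unitaryGroup (Fin (2 ^ n)) ℂ,
            tpow (V : Matrix (Fin (2 ^ n)) (Fin (2 ^ n)) ℂ) (ℓ + k) P A *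
              starRingEnd ℂ (tpow (V : Matrix (Fin (2 ^ n)) (Fin (2 ^ n)) ℂ) (ℓ + k) Q B) ∂μ := by
    intro P A Q B
    have h := hdesign (Matrix.single A B (1 : ℂ)) P Q
    simp only [tpow_unit] at h
    exact h
  -- entrywise expansion of the mixed twirl as a combination of monomials
  have entry : ∀ U : Matrix (Fin (2 ^ n)) (Fin (2 ^ n)) ℂ,
      (mixedPow U ℓ k * Γ * (mixedPow U ℓ k)ᴴ) p q
        = ∑ a, ∑ b, Γ a b *
            (tpow U (ℓ + k) (Fin.append p.1 b.2) (Fin.append a.1 q.2) *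
              starRingEnd ℂ (tpow U (ℓ + k) (Fin.append q.1 a.2) (Fin.append b.1 p.2))) := by
    intro U
    simp only [Matrix.mul_apply, conjTranspose_apply, Finset.sum_mul]
    rw [Finset.sum_comm]
    refine Finset.sum_congr rfl fun a _ => Finset.sum_congr rfl fun b _ => ?_
    simp only [mixedPow, tpow_append, tpow_conjT, RCLike.star_def, _root_.map_mul,
      Complex.conj_conj]
    ring
  -- integrability of each monomial
  have integ : ∀ P A Q B : Fin (ℓ + k) → Fin (2 ^ n),
      Integrable (fun V : Matrix.unitaryGroup (Fin (2 ^ n)) ℂ =>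
        tpow (V : Matrix (Fin (2 ^ n)) (Fin (2 ^ n)) ℂ) (ℓ + k) P A *
          starRingEnd ℂ (tpow (V : Matrix (Fin (2 ^ n)) (Fin (2 ^ n)) ℂ) (ℓ + k) Q B)) μ := by
    intro P A Q B
    have hcoe : Continuous fun V : Matrix.unitaryGroup (Fin (2 ^ n)) ℂ =>
        (V : Matrix (Fin (2 ^ n)) (Fin (2 ^ n)) ℂ) := continuous_subtype_val
    have hc : Continuous fun V : Matrix.unitaryGroup (Fin (2 ^ n)) ℂ =>
        tpow (V : Matrix (Fin (2 ^ n)) (Fin (2 ^ n)) ℂ) (ℓ + k) P A *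
          starRingEnd ℂ (tpow (V : Matrix (Fin (2 ^ n)) (Fin (2 ^ n)) ℂ) (ℓ + k) Q B) := by
      unfold tpow
      exact ((continuous_finset_prod _ fun i _ => hcoe.matrix_elem _ _).mul
        (continuous_star.comp (continuous_finset_prod _ fun i _ => hcoe.matrix_elem _ _)))
    refine ⟨hc.aestronglyMeasurable, HasFiniteIntegral.of_bounded (C := 1) (ae_of_all _ ?_)⟩
    intro V
    rw [norm_mul, RCLike.norm_conj]
    calc ‖tpow (V : Matrix (Fin (2 ^ n)) (Fin (2 ^ n)) ℂ) (ℓ + k) P A‖ *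
          ‖tpow (V : Matrix (Fin (2 ^ n)) (Fin (2 ^ n)) ℂ) (ℓ + k) Q B‖
        ≤ 1 * 1 :=
          mul_le_mul (tpow_norm_le_one V.2 _ _) (tpow_norm_le_one V.2 _ _)
            (norm_nonneg _) zero_le_one
      _ = 1 := one_mul 1
  -- put everything together
  calc
    (∫ V : Matrix.unitaryGroup (Fin (2 ^ n)) ℂ,
        (mixedPow (V : Matrix (Fin (2 ^ n)) (Fin (2 ^ n)) ℂ) ℓ k * Γ *
          (mixedPow (V : Matrix (Fin (2 ^ n)) (Fin (2 ^ n)) ℂ) ℓ k)ᴴ) p q ∂μ)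
      = ∫ V : Matrix.unitaryGroup (Fin (2 ^ n)) ℂ, ∑ a, ∑ b, Γ a b *
          (tpow (V : Matrix (Fin (2 ^ n)) (Fin (2 ^ n)) ℂ) (ℓ + k)
              (Fin.append p.1 b.2) (Fin.append a.1 q.2) *
            starRingEnd ℂ (tpow (V : Matrix (Fin (2 ^ n)) (Fin (2 ^ n)) ℂ) (ℓ + k)
              (Fin.append q.1 a.2) (Fin.append b.1 p.2))) ∂μ :=
        integral_congr_ae (ae_of_all _ fun V => entry _)
    _ = ∑ a, ∑ b, Γ a b * ∫ V : Matrix.unitaryGroup (Fin (2 ^ n)) ℂ,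
          (tpow (V : Matrix (Fin (2 ^ n)) (Fin (2 ^ n)) ℂ) (ℓ + k)
              (Fin.append p.1 b.2) (Fin.append a.1 q.2) *
            starRingEnd ℂ (tpow (V : Matrix (Fin (2 ^ n)) (Fin (2 ^ n)) ℂ) (ℓ + k)
              (Fin.append q.1 a.2) (Fin.append b.1 p.2))) ∂μ := by
        refine (integral_finset_sum _ fun a _ =>
          integrable_finset_sum _ fun b _ => ((integ _ _ _ _).const_mul _)).trans ?_
        refine Finset.sum_congr rfl fun a _ => ?_
        refine (integral_finset_sum _ fun b _ => ((integ _ _ _ _).const_mul _)).trans ?_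
        exact Finset.sum_congr rfl fun b _ => integral_const_mul _ _
    _ = ∑ a, ∑ b, Γ a b * ((D.card : ℂ)⁻¹ * ∑ U ∈ D,
          tpow (U : Matrix (Fin (2 ^ n)) (Fin (2 ^ n)) ℂ) (ℓ + k)
              (Fin.append p.1 b.2) (Fin.append a.1 q.2) *
            starRingEnd ℂ (tpow (U : Matrix (Fin (2 ^ n)) (Fin (2 ^ n)) ℂ) (ℓ + k)
              (Fin.append q.1 a.2) (Fin.append b.1 p.2))) :=
        Finset.sum_congr rfl fun a _ => Finset.sum_congr rfl fun b _ => by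
          rw [← mono]
    _ = (D.card : ℂ)⁻¹ * ∑ U ∈ D, ∑ a, ∑ b, Γ a b *
          (tpow (U : Matrix (Fin (2 ^ n)) (Fin (2 ^ n)) ℂ) (ℓ + k)
              (Fin.append p.1 b.2) (Fin.append a.1 q.2) *
            starRingEnd ℂ (tpow (U : Matrix (Fin (2 ^ n)) (Fin (2 ^ n)) ℂ) (ℓ + k)
              (Fin.append q.1 a.2) (Fin.append b.1 p.2))) := by
        simp only [Finset.mul_sum]
        conv_rhs => rw [Finset.sum_comm]
        refine Finset.sum_congr rfl fun a _ => ?_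
        conv_rhs => rw [Finset.sum_comm]
        exact Finset.sum_congr rfl fun b _ => Finset.sum_congr rfl fun U _ => by ring
    _ = (D.card : ℂ)⁻¹ * ∑ U ∈ D,
          (mixedPow (U : Matrix (Fin (2 ^ n)) (Fin (2 ^ n)) ℂ) ℓ k * Γ *
            (mixedPow (U : Matrix (Fin (2 ^ n)) (Fin (2 ^ n)) ℂ) ℓ k)ᴴ) p q := by
        rw [Finset.sum_congr rfl fun U _ => (entry _).symm]
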